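/- For all natural numbers n, i, j with n ≥ 1: T_{n+i}·T_{n+j} − (x²−1)·U_{n−1}·U_{n−1+i+j} = T_i·T_j, as an identity of polynomials. -/

import Mathlib

open Polynomial Polynomial.Chebyshev

private lemma cheb_two_mul_sq_sub_one_mul_U (R : Type*) [CommRing R] (m : ℤ) :
    2 * ((X : R[X]) ^ 2 - 1) * U R m = T R (m + 2) - T R m := by
  linear_combination -2 * one_sub_X_sq_mul_U_eq_pol_in_T R m + T_add_two R m

private lemma cheb_U_mul_U (R : Type*) [CommRing R] (m k : ℤ) :
    2 * ((X : R[X]) ^ 2 - 1) * U R (m - 1) * U R (k - 1) =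
      T R (m + k) - T R (m - k) := by
  induction k using Polynomial.Chebyshev.induct with
  | zero => simp
  | one =>
    have h := cheb_two_mul_sq_sub_one_mul_U R (m - 1)
    rw [show m - 1 + 2 = m + 1 by ring] at h
    simpa using h
  | add_two k ih1 ih2 =>
    have h₁ := T_add_two R (m + k)
    have h₂ := T_sub_two R (m - k)
    have h₃ := U_add_two R (k - 1)
    linear_combination (norm := ring_nf)
      2 * ((X : R[X]) ^ 2 - 1) * U R (m - 1) * h₃ + h₂ - h₁ - ih2 + 2 * (X : R[X]) * ih1
  | neg_add_one k ih1 ih2 =>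
    have h₁ := T_add_two R (m + (-k - 1))
    have h₂ := T_sub_two R (m - (-k - 1))
    have h₃ := U_add_two R (-k - 2)
    linear_combination (norm := ring_nf)
      2 * ((X : R[X]) ^ 2 - 1) * U R (m - 1) * h₃ + h₂ - h₁ - ih2 + 2 * (X : R[X]) * ih1

private lemma cheb_pell_int (n i j : ℤ) :
    T ℤ (n + i) * T ℤ (n + j) -
      ((X : ℤ[X]) ^ 2 - 1) * U ℤ (n - 1) * U ℤ (n - 1 + i + j) =
      T ℤ i * T ℤ j := by
  have h : (2 : ℤ[X]) * (T ℤ (n + i) * T ℤ (n + j) -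
      ((X : ℤ[X]) ^ 2 - 1) * U ℤ (n - 1) * U ℤ (n - 1 + i + j)) =
      2 * (T ℤ i * T ℤ j) := by
    have h₁ := T_mul_T ℤ (n + i) (n + j)
    have h₂ := cheb_U_mul_U ℤ n (n + i + j)
    have h₃ := T_mul_T ℤ i j
    have e₁ : n + i + (n + j) = n + (n + i + j) := by ring
    have e₂ : n + i - (n + j) = i - j := by ring
    have e₃ : n - (n + i + j) = -(i + j) := by ring
    have e₄ : n + i + j - 1 = n - 1 + i + j := by ring
    rw [e₁, e₂] at h₁
    rw [e₃, e₄, T_neg] at h₂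
    linear_combination (norm := ring_nf) h₁ - h₂ - h₃
  exact mul_left_cancel₀ (two_ne_zero) h

theorem chebyshev_TT_pell_vajda (R : Type*) [CommRing R] (n i j : ℕ) (hn : 1 ≤ n) :
    T R ((n : ℤ) + i) * T R ((n : ℤ) + j) -
      (X ^ 2 - 1) * U R ((n : ℤ) - 1) * U R ((n : ℤ) - 1 + i + j) =
      T R (i : ℤ) * T R (j : ℤ) := by
  have h := congrArg (Polynomial.map (Int.castRingHom R)) (cheb_pell_int n i j)
  simpa [Polynomial.map_mul, Polynomial.map_sub, Polynomial.map_pow, map_T, map_U] using h
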